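/- Let f and g be functions on a set S satisfying f∘f = f∘g and g∘g = g∘f. Then for every l ≥ 1, f^{∘l}∘f^{∘l} = f^{∘l}∘g^{∘l} and g^{∘l}∘g^{∘l} = g^{∘l}∘f^{∘l}. -/
import Mathlib

theorem stmt_1 {S : Type*} (f g : S → S)
    (hf : f ∘ f = f ∘ g) (hg : g ∘ g = g ∘ f) :
    ∀ l : ℕ, 1 ≤ l →
      f^[l] ∘ f^[l] = f^[l] ∘ g^[l] ∧ g^[l] ∘ g^[l] = g^[l] ∘ f^[l] := by
  have key : ∀ (f g : S → S), f ∘ f = f ∘ g →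
      ∀ m l, 1 ≤ l → f^[l] ∘ g^[m] = f^[l + m] := by
    intro f g hf
    have hA : ∀ k, 1 ≤ k → f^[k] ∘ g = f^[k + 1] := by
      intro k hk
      induction k with
      | zero => omega
      | succ n ih =>
        rcases Nat.eq_or_lt_of_le hk with h | h
        · obtain rfl : n = 0 := by omega
          show f^[1] ∘ g = f^[2]
          rw [Function.iterate_one, show f^[2] = f ∘ f^[1] from Function.iterate_succ' f 1,
            Function.iterate_one]
          exact hf.symm
        · have hn : 1 ≤ n := by omega
          calc f^[n + 1] ∘ g = f ∘ (f^[n] ∘ g) := by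
                rw [Function.iterate_succ', Function.comp_assoc]
            _ = f ∘ f^[n + 1] := by rw [ih hn]
            _ = f^[n + 2] := by rw [← Function.iterate_succ']
    intro m
    induction m with
    | zero => intro l hl; simp
    | succ m ih =>
      intro l hl
      calc f^[l] ∘ g^[m + 1] = (f^[l] ∘ g) ∘ g^[m] := by
            rw [Function.iterate_succ', ← Function.comp_assoc]
        _ = f^[l + 1] ∘ g^[m] := by rw [hA l hl]
        _ = f^[l + 1 + m] := ih (l + 1) (by omega)
        _ = f^[l + (m + 1)] := by ring_nf
  intro l hl
  constructor
  · rw [key f g hf l l hl, ← Function.iterate_add]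
  · rw [key g f hg l l hl, ← Function.iterate_add]
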